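/- Let k be a field, let V₀, V₁, V₂ be finite-dimensional k-vector spaces, let f : V₀ → V₁ be an injective k-linear map and g : V₁ → V₂ a bijective k-linear map, and let e₀ ≤ e₁ ≤ e₂ be natural numbers. Then there is a bijection between: (1) the set of triples (U₀, U₁, U₂) of subspaces Uᵢ ≤ Vᵢ with dim Uᵢ = eᵢ for i = 0,1,2, f(U₀) ⊆ U₁ and g(U₁) ⊆ U₂; and (2) the product of the set of pairs (U₀, U₂) of subspaces U₀ ≤ V₀, U₂ ≤ V₂ with dim U₀ = e₀, dim U₂ = e₂ and (g ∘ f)(U₀) ⊆ U₂, with the set of (e₁ − e₀)-dimensional subspaces of k^{e₂ − e₀}. -/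
import Mathlib


open Module


section Key
variable {k V : Type*} [Field k] [AddCommGroup V] [Module k V] [FiniteDimensional k V]

lemma key_equiv (F W : Submodule k V) (hFW : F ≤ W)
    (e₀ e₁ e₂ : ℕ) (hF : finrank k F = e₀) (hW : finrank k W = e₂) (h01 : e₀ ≤ e₁) :
    Nonempty ({U : Submodule k V // finrank k U = e₁ ∧ F ≤ U ∧ U ≤ W} ≃
      {Z : Submodule k (Fin (e₂ - e₀) → k) // finrank k Z = e₁ - e₀}) := by
  set F' : Submodule k W := F.comap W.subtype with hF'def
  have hF' : finrank k F' = e₀ := by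
    rw [(Submodule.comapSubtypeEquivOfLe hFW).finrank_eq, hF]
  have hQ : finrank k (W ⧸ F') = e₂ - e₀ := by
    have h := F'.finrank_quotient_add_finrank
    rw [hF'] at h
    omega
  have hdim : ∀ p : Submodule k W, F' ≤ p →
      finrank k (p.map F'.mkQ) + e₀ = finrank k p := by
    intro p hp
    have h1 := (F'.mkQ.comp p.subtype).finrank_range_add_finrank_ker
    have h2 : LinearMap.range (F'.mkQ.comp p.subtype) = p.map F'.mkQ := by
      rw [LinearMap.range_comp, Submodule.range_subtype]
    have h3 : LinearMap.ker (F'.mkQ.comp p.subtype) = F'.comap p.subtype := by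
      rw [LinearMap.ker_comp, Submodule.ker_mkQ]
    have h4 : finrank k (F'.comap p.subtype) = e₀ := by
      rw [(Submodule.comapSubtypeEquivOfLe hp).finrank_eq, hF']
    rw [h2, h3, h4] at h1
    exact h1
  obtain ⟨eQ⟩ : Nonempty ((W ⧸ F') ≃ₗ[k] (Fin (e₂ - e₀) → k)) :=
    FiniteDimensional.nonempty_linearEquiv_of_finrank_eq
      (by rw [hQ, Module.finrank_fin_fun])
  have fwd : ∀ U : {U : Submodule k V // finrank k U = e₁ ∧ F ≤ U ∧ U ≤ W},
      finrank k ((U.1.comap W.subtype).map F'.mkQ) = e₁ - e₀ := by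
    intro U
    have hle : F' ≤ U.1.comap W.subtype := Submodule.comap_mono U.2.2.1
    have h := hdim _ hle
    have hU : finrank k (U.1.comap W.subtype) = e₁ := by
      rw [(Submodule.comapSubtypeEquivOfLe U.2.2.2).finrank_eq, U.2.1]
    omega
  have bwd : ∀ Z : {Z : Submodule k (W ⧸ F') // finrank k Z = e₁ - e₀},
      finrank k ((Z.1.comap F'.mkQ).map W.subtype) = e₁ ∧
        F ≤ (Z.1.comap F'.mkQ).map W.subtype ∧ (Z.1.comap F'.mkQ).map W.subtype ≤ W := by
    intro Z
    have hle : F' ≤ Z.1.comap F'.mkQ :=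
      (Submodule.ker_mkQ F').symm.trans_le (LinearMap.ker_le_comap _)
    have hfr : finrank k ((Z.1.comap F'.mkQ).map W.subtype)
        = finrank k (Z.1.comap F'.mkQ) :=
      ((Z.1.comap F'.mkQ).equivMapOfInjective _ W.injective_subtype).symm.finrank_eq
    have hmapc : (Z.1.comap F'.mkQ).map F'.mkQ = Z.1 :=
      Submodule.map_comap_eq_of_surjective F'.mkQ_surjective _
    have h := hdim _ hle
    rw [hmapc, Z.2] at h
    refine ⟨by omega, ?_, Submodule.map_subtype_le _ _⟩
    have hFm : F'.map W.subtype = F := by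
      rw [hF'def, Submodule.map_comap_subtype]
      exact inf_eq_right.mpr hFW
    have hm : F'.map W.subtype ≤ (Z.1.comap F'.mkQ).map W.subtype :=
      Submodule.map_mono hle
    rwa [hFm] at hm
  refine ⟨Equiv.trans (Equiv.mk
      (fun U => ⟨(U.1.comap W.subtype).map F'.mkQ, fwd U⟩)
      (fun Z => ⟨(Z.1.comap F'.mkQ).map W.subtype, bwd Z⟩) ?_ ?_)
    (Equiv.subtypeEquiv (Submodule.orderIsoMapComap eQ).toEquiv
      (fun Z => by
        have hfin : finrank k ((Submodule.orderIsoMapComap eQ).toEquiv Z) = finrank k Z :=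
          LinearEquiv.finrank_map_eq eQ Z
        rw [hfin]))⟩
  · intro U
    ext1
    dsimp only
    have hle : F' ≤ U.1.comap W.subtype := Submodule.comap_mono U.2.2.1
    rw [Submodule.comap_map_eq, Submodule.ker_mkQ, sup_eq_left.mpr hle,
      Submodule.map_comap_subtype, inf_eq_right.mpr U.2.2.2]
  · intro Z
    ext1
    dsimp only
    rw [Submodule.comap_map_eq_of_injective W.injective_subtype,
      Submodule.map_comap_eq_of_surjective F'.mkQ_surjective]

end Key


/-- Reduction of type one (first instance): for an injective map `f : V₀ → V₁`, a
bijective map `g : V₁ → V₂` and `e₀ ≤ e₁ ≤ e₂`, the set of chains of subspaces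
`(U₀, U₁, U₂)` of dimensions `(e₀, e₁, e₂)` compatible with `f` and `g` is in
bijection with the product of the set of compatible pairs `(U₀, U₂)` for the
composed map `g ∘ f` with the Grassmannian of `(e₁ − e₀)`-dimensional subspaces
of `k^{e₂ − e₀}`. -/
theorem stmt1 (k : Type*) [Field k]
    (V₀ V₁ V₂ : Type*)
    [AddCommGroup V₀] [Module k V₀] [FiniteDimensional k V₀]
    [AddCommGroup V₁] [Module k V₁] [FiniteDimensional k V₁]
    [AddCommGroup V₂] [Module k V₂] [FiniteDimensional k V₂]
    (f : V₀ →ₗ[k] V₁) (g : V₁ →ₗ[k] V₂)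
    (hf : Function.Injective f) (hg : Function.Bijective g)
    (e₀ e₁ e₂ : ℕ) (h01 : e₀ ≤ e₁) (h12 : e₁ ≤ e₂) :
    Nonempty (
      {U : Submodule k V₀ × Submodule k V₁ × Submodule k V₂ //
          finrank k ↥U.1 = e₀ ∧ finrank k ↥U.2.1 = e₁ ∧ finrank k ↥U.2.2 = e₂ ∧
          U.1.map f ≤ U.2.1 ∧ U.2.1.map g ≤ U.2.2}
        ≃
      ({U : Submodule k V₀ × Submodule k V₂ //
          finrank k ↥U.1 = e₀ ∧ finrank k ↥U.2 = e₂ ∧ U.1.map (g ∘ₗ f) ≤ U.2}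
        × {W : Submodule k (Fin (e₂ - e₀) → k) // finrank k ↥W = e₁ - e₀})) := by
  classical
  have hfiber : ∀ (P : {U : Submodule k V₀ × Submodule k V₂ //
      finrank k ↥U.1 = e₀ ∧ finrank k ↥U.2 = e₂ ∧ U.1.map (g ∘ₗ f) ≤ U.2}),
      Nonempty ({U₁ : Submodule k V₁ //
          finrank k U₁ = e₁ ∧ P.1.1.map f ≤ U₁ ∧ U₁.map g ≤ P.1.2} ≃
        {W : Submodule k (Fin (e₂ - e₀) → k) // finrank k ↥W = e₁ - e₀}) := by
    intro P
    have hFW : P.1.1.map f ≤ P.1.2.comap g := by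
      rw [← Submodule.map_le_iff_le_comap, ← Submodule.map_comp]
      exact P.2.2.2
    have hF : finrank k (P.1.1.map f) = e₀ := by
      rw [← (P.1.1.equivMapOfInjective f hf).finrank_eq]
      exact P.2.1
    have hW : finrank k (P.1.2.comap g) = e₂ := by
      rw [((P.1.2.comap g).equivMapOfInjective g hg.1).finrank_eq,
        Submodule.map_comap_eq_of_surjective hg.2]
      exact P.2.2.1
    exact ⟨(Equiv.subtypeEquivRight (fun U₁ =>
        and_congr_right fun _ => and_congr_right fun _ =>
          Submodule.map_le_iff_le_comap)).trans
      (key_equiv _ _ hFW e₀ e₁ e₂ hF hW h01).some⟩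
  refine ⟨Equiv.trans (Equiv.mk
      (fun T => ⟨⟨(T.1.1, T.1.2.2), T.2.1, T.2.2.2.1, by
          rw [Submodule.map_comp]
          exact (Submodule.map_mono T.2.2.2.2.1).trans T.2.2.2.2.2⟩,
        ⟨T.1.2.1, T.2.2.1, T.2.2.2.2.1, T.2.2.2.2.2⟩⟩ :
        _ → (P : {U : Submodule k V₀ × Submodule k V₂ //
          finrank k ↥U.1 = e₀ ∧ finrank k ↥U.2 = e₂ ∧ U.1.map (g ∘ₗ f) ≤ U.2}) ×
          {U₁ : Submodule k V₁ //
            finrank k U₁ = e₁ ∧ P.1.1.map f ≤ U₁ ∧ U₁.map g ≤ P.1.2})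
      (fun S => ⟨(S.1.1.1, S.2.1, S.1.1.2),
        S.1.2.1, S.2.2.1, S.1.2.2.1, S.2.2.2.1, S.2.2.2.2⟩)
      (fun T => rfl) (fun S => rfl))
    ((Equiv.sigmaCongrRight fun P => (hfiber P).some).trans
      (Equiv.sigmaEquivProd _ _))⟩
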